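/- arXiv:2412.17564 — 3 statements merged into one kernel-verified Lean document; each statement's English description precedes it below -/
import Mathlib

section
/- Let M be a unital C*-algebra with state ω and u ∈ M a unitary. Then for every integer n, ‖ω ∘ Der(uⁿ)‖ ≤ |n| · ‖ω ∘ Der u‖, where (Der a)(x) := ax − xa. -/
set_option linter.unusedSectionVars false



open scoped ComplexOrder
open ContinuousLinearMap

section Aux

variable {M : Type*} [NormedRing M] [StarRing M] [CStarRing M]
    [NormedAlgebra ℂ M] [CompleteSpace M] [StarModule ℂ M] [SMulCommClass ℂ M M]
    [IsScalarTower ℂ M M]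

private noncomputable def Fd (ω : M →L[ℂ] ℂ) (a : M) : M →L[ℂ] ℂ :=
  ω.comp (mul ℂ M a - (mul ℂ M).flip a)

private lemma Fd_apply (ω : M →L[ℂ] ℂ) (a x : M) : Fd ω a x = ω (a * x - x * a) := by
  simp [Fd]

private lemma flip_norm_le (a : M) : ‖(mul ℂ M).flip a‖ ≤ ‖a‖ :=
  opNorm_le_bound _ (norm_nonneg a) fun x => by
    simpa [mul_comm ‖x‖ ‖a‖] using norm_mul_le x a

private lemma Fd_mul (ω : M →L[ℂ] ℂ) (a b : M) :
    Fd ω (a * b) = (Fd ω a).comp (mul ℂ M b) + (Fd ω b).comp ((mul ℂ M).flip a) := by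
  ext x
  have h : a * b * x - x * (a * b)
      = (a * (b * x) - (b * x) * a) + (b * (x * a) - (x * a) * b) := by noncomm_ring
  simp only [ContinuousLinearMap.add_apply, ContinuousLinearMap.comp_apply, mul_apply',
    flip_apply, Fd_apply]
  rw [h, map_add]

private lemma Fd_mul_norm (ω : M →L[ℂ] ℂ) (a b : M) :
    ‖Fd ω (a * b)‖ ≤ ‖Fd ω a‖ * ‖b‖ + ‖Fd ω b‖ * ‖a‖ := by
  rw [Fd_mul]
  refine (norm_add_le _ _).trans (add_le_add ?_ ?_)
  · exact (opNorm_comp_le _ _).trans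
      (mul_le_mul_of_nonneg_left (opNorm_mul_apply_le ℂ M b) (norm_nonneg _))
  · exact (opNorm_comp_le _ _).trans
      (mul_le_mul_of_nonneg_left (flip_norm_le a) (norm_nonneg _))

private lemma Fd_one (ω : M →L[ℂ] ℂ) : Fd ω 1 = 0 := by
  ext x; simp [Fd_apply]

private lemma Fd_pow (ω : M →L[ℂ] ℂ) [Nontrivial M] (v : unitary M) (m : ℕ) :
    ‖Fd ω ((v ^ m : unitary M) : M)‖ ≤ m * ‖Fd ω (v : M)‖ := by
  induction m with
  | zero => simp [Fd_one]
  | succ k ih =>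
    have hc : ((v ^ (k + 1) : unitary M) : M) = ((v ^ k : unitary M) : M) * (v : M) := by
      rw [pow_succ]; rfl
    rw [hc]
    calc ‖Fd ω (((v ^ k : unitary M) : M) * (v : M))‖
        ≤ ‖Fd ω ((v ^ k : unitary M) : M)‖ * ‖(v : M)‖
          + ‖Fd ω (v : M)‖ * ‖((v ^ k : unitary M) : M)‖ := Fd_mul_norm ω _ _
      _ = ‖Fd ω ((v ^ k : unitary M) : M)‖ + ‖Fd ω (v : M)‖ := by
          rw [CStarRing.norm_coe_unitary, CStarRing.norm_coe_unitary, mul_one, mul_one]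
      _ ≤ k * ‖Fd ω (v : M)‖ + ‖Fd ω (v : M)‖ := by gcongr
      _ = (k + 1 : ℕ) * ‖Fd ω (v : M)‖ := by push_cast; ring

private lemma Fd_inv (ω : M →L[ℂ] ℂ) [Nontrivial M] (u : unitary M) :
    ‖Fd ω ((u⁻¹ : unitary M) : M)‖ ≤ ‖Fd ω (u : M)‖ := by
  have hinv : ((u⁻¹ : unitary M) : M) = star (u : M) := by
    rw [← Unitary.star_eq_inv, Unitary.coe_star]
  have key : Fd ω ((u⁻¹ : unitary M) : M)
      = -((Fd ω (u : M)).comp ((mul ℂ M (star (u : M))).comp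
          ((mul ℂ M).flip (star (u : M))))) := by
    ext x
    simp only [ContinuousLinearMap.neg_apply, ContinuousLinearMap.comp_apply, mul_apply',
      flip_apply, Fd_apply, hinv]
    have h1 : (u : M) * (star (u : M) * (x * star (u : M)))
        = x * star (u : M) := by
      rw [← mul_assoc, Unitary.mul_star_self_of_mem u.prop, one_mul]
    have h2 : (star (u : M) * (x * star (u : M))) * (u : M)
        = star (u : M) * x := by
      rw [mul_assoc, mul_assoc, Unitary.star_mul_self_of_mem u.prop, mul_one]
    rw [h1, h2, ← map_neg, neg_sub]
  rw [key, norm_neg]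
  calc ‖(Fd ω (u : M)).comp ((mul ℂ M (star (u : M))).comp ((mul ℂ M).flip (star (u : M))))‖
      ≤ ‖Fd ω (u : M)‖ * ‖(mul ℂ M (star (u : M))).comp ((mul ℂ M).flip (star (u : M)))‖ :=
        opNorm_comp_le _ _
    _ ≤ ‖Fd ω (u : M)‖ * (‖mul ℂ M (star (u : M))‖ * ‖(mul ℂ M).flip (star (u : M))‖) := by
        gcongr; exact opNorm_comp_le _ _
    _ ≤ ‖Fd ω (u : M)‖ * (1 * 1) := by
        have hn : ‖star (u : M)‖ = 1 := by
          rw [norm_star, CStarRing.norm_coe_unitary]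
        gcongr
        · exact (opNorm_mul_apply_le ℂ M _).trans_eq hn
        · exact (flip_norm_le _).trans_eq hn
    _ = ‖Fd ω (u : M)‖ := by ring

end Aux

/-- For a state `ω` on a unital C*-algebra `M` and a unitary `u`,
`‖ω ∘ Der (uⁿ)‖ ≤ |n| · ‖ω ∘ Der u‖` for every integer `n`, where `Der a : x ↦ a x − x a`. -/
theorem stmt8 {M : Type*} [NormedRing M] [StarRing M] [CStarRing M]
    [NormedAlgebra ℂ M] [CompleteSpace M] [StarModule ℂ M] [SMulCommClass ℂ M M]
    [IsScalarTower ℂ M M]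
    (ω : M →L[ℂ] ℂ) (hone : ω 1 = 1) (hpos : ∀ x : M, 0 ≤ ω (star x * x))
    (u : unitary M) (n : ℤ) :
    ‖ω.comp (ContinuousLinearMap.mul ℂ M ((u ^ n : unitary M) : M)
        - (ContinuousLinearMap.mul ℂ M).flip ((u ^ n : unitary M) : M))‖
      ≤ |(n : ℝ)| * ‖ω.comp (ContinuousLinearMap.mul ℂ M (u : M)
        - (ContinuousLinearMap.mul ℂ M).flip (u : M))‖ := by
  have : Nontrivial M := by
    refine ⟨1, 0, fun h => one_ne_zero (α := ℂ) ?_⟩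
    rw [← hone, h, map_zero]
  show ‖Fd ω ((u ^ n : unitary M) : M)‖ ≤ |(n : ℝ)| * ‖Fd ω (u : M)‖
  obtain hn | hn := le_or_gt 0 n
  · obtain ⟨m, rfl⟩ := Int.eq_ofNat_of_zero_le hn
    have : (u ^ (m : ℤ) : unitary M) = u ^ m := zpow_natCast u m
    rw [this]
    simpa using Fd_pow ω u m
  · obtain ⟨m, rfl⟩ : ∃ m : ℕ, n = -(m : ℤ) := ⟨n.natAbs, by omega⟩
    have hu : (u ^ (-(m : ℤ)) : unitary M) = (u⁻¹) ^ m := by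
      rw [zpow_neg, zpow_natCast, inv_pow]
    rw [hu]
    have h1 := Fd_pow ω (u⁻¹) m
    have h2 := Fd_inv ω u
    calc ‖Fd ω (((u⁻¹) ^ m : unitary M) : M)‖
        ≤ m * ‖Fd ω ((u⁻¹ : unitary M) : M)‖ := h1
      _ ≤ m * ‖Fd ω (u : M)‖ := by
          gcongr
      _ = |((-(m : ℤ) : ℤ) : ℝ)| * ‖Fd ω (u : M)‖ := by
          push_cast; rw [abs_neg, abs_of_nonneg (by positivity)]
end

section
/- Let log : 𝕋 → ℂ denote the branch of the logarithm on the unit circle taking values in [−iπ, iπ). Then the map h : 𝕋 × [0,1] → ℂ, h(z,t) := exp(t·log z), satisfies: for each fixed t, |h(z,t)| = 1 for all z, h(z,0) = 1, h(z,1) = z, and t ↦ h(·,t) is continuous from [0,1] to L²(𝕋, λ) where λ is the Haar (normalized Lebesgue) measure on 𝕋. -/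
open MeasureTheory Set Filter Topology

noncomputable instance : MeasurableSpace Circle := borel Circle
instance : BorelSpace Circle := ⟨rfl⟩

/-- The branch of the logarithm on the unit circle taking values in `[−iπ, iπ)`. -/
noncomputable def circleLog (z : Circle) : ℂ :=
  Complex.I * (if Complex.arg (z : ℂ) = Real.pi then -Real.pi else Complex.arg (z : ℂ))

/-- `h(z,t) := exp (t · log z)`. -/
noncomputable def circlePow (z : Circle) (t : ℝ) : ℂ := Complex.exp ((t : ℂ) * circleLog z)

/-- The normalized Haar measure on the circle. -/
noncomputable def circleHaar : Measure Circle := MeasureTheory.Measure.haar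

instance : IsFiniteMeasure circleHaar := by
  unfold circleHaar; infer_instance

lemma circlePow_norm (z : Circle) (t : ℝ) : ‖circlePow z t‖ = 1 := by
  unfold circlePow circleLog
  rw [Complex.norm_exp]
  simp [Complex.mul_re, Complex.mul_im]

lemma circle_coe_measurable : Measurable (fun z : Circle => (z : ℂ)) :=
  @Continuous.measurable Circle ℂ _ (borel Circle) ⟨le_rfl⟩ _ _ _ _ continuous_subtype_val

lemma circleLog_measurable : Measurable circleLog := by
  have hc : Measurable (fun z : Circle => (z : ℂ)) := circle_coe_measurable
  have harg : Measurable fun z : Circle => Complex.arg (z : ℂ) :=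
    Complex.measurable_arg.comp hc
  have hite : Measurable fun z : Circle =>
      (if Complex.arg (z : ℂ) = Real.pi then (-Real.pi : ℝ) else Complex.arg (z : ℂ)) :=
    Measurable.ite (harg (measurableSet_singleton Real.pi)) measurable_const harg
  exact ((Complex.continuous_ofReal.measurable.comp hite).const_mul _)

lemma circlePow_measurable (t : ℝ) : Measurable fun z => circlePow z t := by
  exact Complex.continuous_exp.measurable.comp (circleLog_measurable.const_mul _)

lemma circlePow_cont (z : Circle) : Continuous fun t : ℝ => circlePow z t := by
  exact Complex.continuous_exp.comp ((Complex.continuous_ofReal).mul continuous_const)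

/-- `h(z,t) = exp(t log z)` satisfies `|h(z,t)| = 1`, `h(z,0) = 1`, `h(z,1) = z`, and
`t ↦ h(·,t)` is continuous from `[0,1]` to `L²(𝕋, λ)`. -/
theorem stmt9 :
    (∀ t ∈ Icc (0 : ℝ) 1, ∀ z : Circle, ‖circlePow z t‖ = 1) ∧
    (∀ z : Circle, circlePow z 0 = 1) ∧
    (∀ z : Circle, circlePow z 1 = (z : ℂ)) ∧
    (∀ t₀ ∈ Icc (0 : ℝ) 1,
      Tendsto (fun t : ℝ => ∫ z : Circle, ‖circlePow z t - circlePow z t₀‖ ^ 2 ∂circleHaar)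
        (nhdsWithin t₀ (Icc (0 : ℝ) 1)) (nhds 0)) := by
  refine ⟨fun t _ z => circlePow_norm z t, ?_, ?_, ?_⟩
  · intro z; simp [circlePow]
  · intro z
    unfold circlePow circleLog
    have habs : ‖(z : ℂ)‖ = 1 := by
      exact Circle.norm_coe z
    have key := Complex.norm_mul_exp_arg_mul_I (z : ℂ)
    rw [habs] at key
    by_cases h : Complex.arg (z : ℂ) = Real.pi
    · have hz : (z : ℂ) = -1 := by
        rw [h] at key
        simpa [Complex.exp_pi_mul_I] using key.symm
      simp only [h, if_pos]
      rw [hz]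
      push_cast
      rw [show ((1:ℂ) * (Complex.I * -(Real.pi : ℂ))) = -(Real.pi * Complex.I) by ring]
      rw [Complex.exp_neg, Complex.exp_pi_mul_I]
      norm_num
    · simp only [h, if_neg, not_false_iff]
      rw [show (((1:ℝ):ℂ) * (Complex.I * ((Complex.arg (z : ℂ) : ℝ) : ℂ)))
        = (Complex.arg (z : ℂ) : ℂ) * Complex.I by push_cast; ring]
      simpa using key
  · intro t₀ ht₀
    have h0 : (0 : ℝ) = ∫ _z : Circle, (0 : ℝ) ∂circleHaar := by simp
    rw [h0]
    apply tendsto_integral_filter_of_dominated_convergence (fun _ => (4 : ℝ))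
    · filter_upwards with t
      exact (((circlePow_measurable t).sub (circlePow_measurable t₀)).norm.pow
        measurable_const).aestronglyMeasurable
    · filter_upwards with t
      filter_upwards with z
      have h1 := circlePow_norm z t
      have h2 := circlePow_norm z t₀
      have hle : ‖circlePow z t - circlePow z t₀‖ ≤ 2 := by
        calc ‖circlePow z t - circlePow z t₀‖ ≤ ‖circlePow z t‖ + ‖circlePow z t₀‖ :=
          norm_sub_le _ _
        _ = 2 := by rw [h1, h2]; norm_num
      have hnn : (0:ℝ) ≤ ‖circlePow z t - circlePow z t₀‖ := norm_nonneg _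
      rw [Real.norm_eq_abs, abs_of_nonneg (by positivity)]
      nlinarith
    · exact integrable_const _
    · filter_upwards with z
      have h1 : Tendsto (fun t => circlePow z t) (nhdsWithin t₀ (Icc (0:ℝ) 1))
          (nhds (circlePow z t₀)) :=
        ((circlePow_cont z).tendsto t₀).mono_left nhdsWithin_le_nhds
      have h2 : Tendsto (fun t => ‖circlePow z t - circlePow z t₀‖)
          (nhdsWithin t₀ (Icc (0:ℝ) 1)) (nhds ‖circlePow z t₀ - circlePow z t₀‖) :=
        (h1.sub (tendsto_const_nhds (x := circlePow z t₀))).norm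
      simpa using h2.pow 2
end

section
/- Let G be a topological group with right-invariant metric d, H ⊆ G a subgroup, X := H\G with quotient metric d_X(Hu, Hv) = inf_{w∈H} d(u, wv), and Q : G → X the quotient map. If σ : X → G is continuous with d(σ(x), Q⁻¹(x)) < ε for all x ∈ X (where d(g, S) := inf_{s∈S} d(g,s)), then for every x₀ ∈ X and κ ∈ (0, ε) with Q⁻¹(x₀) ∩ Ball(σ(x₀), ε−κ) ≠ ∅, the set Q(Ball(σ(x₀), ε−κ)) ∩ {x : d(σ(x₀), σ(x)) < κ} is an open neighborhood of x₀ contained in {x : Q⁻¹(x) ∩ Ball(σ(x), ε) ≠ ∅}. -/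
open Metric Set

/-- The key openness step: for a topological group `G` with right-invariant metric,
`H ≤ G`, `X = H\G` with quotient map `Q`, and a continuous `σ : X → G` with
`d(σ x, Q⁻¹ x) < ε` for all `x`: for every `x₀` and `κ ∈ (0, ε)` with
`Q⁻¹ x₀ ∩ Ball(σ x₀, ε−κ) ≠ ∅`, the set
`Q(Ball(σ x₀, ε−κ)) ∩ {x : d(σ x₀, σ x) < κ}` is an open neighborhood of `x₀` contained in
`{x : Q⁻¹ x ∩ Ball(σ x, ε) ≠ ∅}`. -/
theorem stmt19 {G : Type*} [Group G] [MetricSpace G] [IsTopologicalGroup G]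
    (hinv : ∀ u v g : G, dist (u * g) (v * g) = dist u v)
    (H : Subgroup G) (σ : Quotient (QuotientGroup.rightRel H) → G) (hσ : Continuous σ)
    (ε : ℝ) (hsec : ∀ x, Metric.infDist (σ x) (Quotient.mk (QuotientGroup.rightRel H) ⁻¹' {x}) < ε)
    (x₀ : Quotient (QuotientGroup.rightRel H)) (κ : ℝ) (hκ : κ ∈ Set.Ioo 0 ε)
    (hne : ((Quotient.mk (QuotientGroup.rightRel H) ⁻¹' {x₀}) ∩
      Metric.ball (σ x₀) (ε - κ)).Nonempty) :
    IsOpen ((Quotient.mk (QuotientGroup.rightRel H) '' Metric.ball (σ x₀) (ε - κ)) ∩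
        {x | dist (σ x₀) (σ x) < κ}) ∧
    x₀ ∈ (Quotient.mk (QuotientGroup.rightRel H) '' Metric.ball (σ x₀) (ε - κ)) ∩
        {x | dist (σ x₀) (σ x) < κ} ∧
    ((Quotient.mk (QuotientGroup.rightRel H) '' Metric.ball (σ x₀) (ε - κ)) ∩
        {x | dist (σ x₀) (σ x) < κ}) ⊆
      {x | ((Quotient.mk (QuotientGroup.rightRel H) ⁻¹' {x}) ∩
        Metric.ball (σ x) ε).Nonempty} := by
  obtain ⟨u₀, hu₀Q, hu₀b⟩ := hne
  refine ⟨?_, ⟨⟨u₀, hu₀b, hu₀Q⟩, by simpa using hκ.1⟩, ?_⟩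
  · apply IsOpen.inter
    · rw [← isQuotientMap_quotient_mk'.isOpen_preimage]
      show IsOpen (Quotient.mk (QuotientGroup.rightRel H) ⁻¹'
        (Quotient.mk (QuotientGroup.rightRel H) '' Metric.ball (σ x₀) (ε - κ)))
      have hEq : Quotient.mk (QuotientGroup.rightRel H) ⁻¹'
          (Quotient.mk (QuotientGroup.rightRel H) '' Metric.ball (σ x₀) (ε - κ)) =
          ⋃ h : H, (fun g => (h : G) * g) '' Metric.ball (σ x₀) (ε - κ) := by
        ext g
        simp only [mem_preimage, mem_image, mem_iUnion]
        constructor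
        · rintro ⟨u, hu, hQ⟩
          have hmem : g * u⁻¹ ∈ H :=
            (QuotientGroup.rightRel_apply).mp (Quotient.exact hQ)
          exact ⟨⟨g * u⁻¹, hmem⟩, u, hu, by group⟩
        · rintro ⟨h, u, hu, rfl⟩
          exact ⟨u, hu, Quotient.sound
            ((QuotientGroup.rightRel_apply).mpr (by simp [h.2]))⟩
      rw [hEq]
      exact isOpen_iUnion fun h => (isOpenMap_mul_left (h : G)) _ isOpen_ball
    · have hEq : {x | dist (σ x₀) (σ x) < κ} = σ ⁻¹' Metric.ball (σ x₀) κ := by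
        ext x; simp [Metric.mem_ball, dist_comm]
      rw [hEq]
      exact isOpen_ball.preimage hσ
  · rintro x ⟨⟨u, hu, rfl⟩, hx⟩
    refine ⟨u, rfl, ?_⟩
    rw [Metric.mem_ball] at hu ⊢
    calc dist u (σ (Quotient.mk (QuotientGroup.rightRel H) u))
        ≤ dist u (σ x₀) + dist (σ x₀) (σ (Quotient.mk (QuotientGroup.rightRel H) u)) :=
          dist_triangle _ _ _
      _ < (ε - κ) + κ := add_lt_add hu hx
      _ = ε := by ring
end
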